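/- With f_n the Fibonacci polynomial system and d_n its degree sequence (d_0=1, d_1=deg f, d_{n+1}=d_n+d_{n-1}), there exists a constant C > 0 such that for all n ≥ 0 and all z ∈ ℂ: |(1/d_{n+1})·log₊|f_{n+1}(z)| − (1/d_n)·log₊|f_n(z)|| ≤ C/d_{n+1}. Consequently, the sequence g_n(z) = (1/d_n)·log₊|f_n(z)| converges uniformly on ℂ. -/

import Mathlib

open Real

noncomputable def Complex.abs : AbsoluteValue ℂ ℝ :=
  IsAbsoluteValue.toAbsoluteValue (norm : ℂ → ℝ)

lemma myL_max_log (x : ℝ) (hx : 0 ≤ x) : max (Real.log x) 0 = Real.log (max x 1) := by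
  rcases le_or_gt 1 x with h | h
  · rw [max_eq_left h, max_eq_left (Real.log_nonneg h)]
  · rw [max_eq_right h.le, Real.log_one, max_eq_right]
    rcases eq_or_lt_of_le hx with h0 | h0
    · simp [← h0]
    · exact (Real.log_neg h0 h).le

lemma myL_nonneg (x : ℝ) : 0 ≤ Real.log (max x 1) :=
  Real.log_nonneg (le_max_right _ _)

lemma myL_mono {x y : ℝ} (h : x ≤ y) : Real.log (max x 1) ≤ Real.log (max y 1) := by
  apply Real.log_le_log (by positivity) (max_le_max h le_rfl)

lemma myL_le_log {x M : ℝ} (h1 : 1 ≤ M) (hx : x ≤ M) : Real.log (max x 1) ≤ Real.log M := by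
  apply Real.log_le_log (by positivity) (max_le hx h1)

lemma myL_mul_le {x y : ℝ} (hx : 0 ≤ x) (hy : 0 ≤ y) :
    Real.log (max (x * y) 1) ≤ Real.log (max x 1) + Real.log (max y 1) := by
  have hx1 : (0:ℝ) < max x 1 := by positivity
  have hy1 : (0:ℝ) < max y 1 := by positivity
  rw [← Real.log_mul hx1.ne' hy1.ne']
  apply Real.log_le_log (by positivity)
  apply max_le
  · exact mul_le_mul (le_max_left _ _) (le_max_left _ _) hy hx1.le
  · calc (1:ℝ) = 1 * 1 := by ring
      _ ≤ max x 1 * max y 1 :=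
        mul_le_mul (le_max_right _ _) (le_max_right _ _) zero_le_one hx1.le

lemma myL_add_le {x : ℝ} (y : ℝ) (hx : 0 ≤ x) (hy : 0 ≤ y) :
    Real.log (max (x + y) 1) ≤ Real.log (max x 1) + Real.log (1 + y) := by
  have hx1 : (0:ℝ) < max x 1 := by positivity
  have h1y : (0:ℝ) < 1 + y := by positivity
  rw [← Real.log_mul hx1.ne' h1y.ne']
  apply Real.log_le_log (by positivity)
  apply max_le
  · have h1 : x ≤ max x 1 := le_max_left _ _
    have h2 : y ≤ y * max x 1 := le_mul_of_one_le_right hy (le_max_right _ _)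
    nlinarith
  · nlinarith [le_max_right x 1]

lemma myL_prod_lower {M x y : ℝ} (hM : 2 ≤ M) (hx0 : 0 ≤ x) (hy0 : 0 ≤ y)
    (h1 : M ≤ x) (h2 : 1/2 ≤ y) :
    Real.log (max x 1) + Real.log (max y 1) - (2 * Real.log M + Real.log 2)
      ≤ Real.log (max (x * y) 1) := by
  have hx1 : 1 ≤ x := by linarith
  have hlogM : 0 ≤ Real.log M := Real.log_nonneg (by linarith)
  have hlog2 : 0 ≤ Real.log 2 := Real.log_nonneg one_le_two
  rcases le_or_gt 1 y with hy | hy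
  · have hxy : 1 ≤ x * y := hx1.trans (le_mul_of_one_le_right hx0 hy)
    rw [max_eq_left hx1, max_eq_left hy, max_eq_left hxy,
      Real.log_mul (by linarith) (by linarith)]
    linarith
  · have hxy : 1 ≤ x * y := by nlinarith
    rw [max_eq_left hx1, max_eq_right hy.le, Real.log_one, max_eq_left hxy,
      Real.log_mul (by linarith) (by linarith)]
    have : Real.log (1/2) ≤ Real.log y := Real.log_le_log (by norm_num) h2
    rw [show (1:ℝ)/2 = 2⁻¹ by norm_num, Real.log_inv] at this
    linarith

lemma poly_eval_le (f : Polynomial ℂ) (z : ℂ) :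
    Complex.abs (f.eval z) ≤
      (∑ i ∈ Finset.range (f.natDegree + 1), Complex.abs (f.coeff i)) *
        (max (Complex.abs z) 1) ^ f.natDegree := by
  set m := max (Complex.abs z) 1 with hm
  have hm1 : 1 ≤ m := le_max_right _ _
  rw [Polynomial.eval_eq_sum_range]
  calc Complex.abs (∑ i ∈ Finset.range (f.natDegree + 1), f.coeff i * z ^ i)
      ≤ ∑ i ∈ Finset.range (f.natDegree + 1), Complex.abs (f.coeff i * z ^ i) :=
        Complex.abs.sum_le _ _
    _ ≤ ∑ i ∈ Finset.range (f.natDegree + 1), Complex.abs (f.coeff i) * m ^ f.natDegree := by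
        apply Finset.sum_le_sum
        intro i hi
        rw [map_mul, map_pow]
        apply mul_le_mul_of_nonneg_left _ (AbsoluteValue.nonneg _ _)
        calc Complex.abs z ^ i ≤ m ^ i :=
              pow_le_pow_left₀ (AbsoluteValue.nonneg _ _) (le_max_left _ _) i
          _ ≤ m ^ f.natDegree :=
              pow_le_pow_right₀ hm1 (Nat.lt_succ_iff.mp (Finset.mem_range.mp hi))
    _ = _ := by rw [Finset.sum_mul]

lemma poly_lower (f : Polynomial ℂ) (hf : 0 < f.degree) :
    ∃ R : ℝ, 1 ≤ R ∧ ∀ z : ℂ, R ≤ Complex.abs z →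
      1 ≤ Complex.abs (f.eval z) ∧
      Complex.abs f.leadingCoeff / 2 * Complex.abs z ^ f.natDegree ≤ Complex.abs (f.eval z) := by
  have hdpos : 0 < f.natDegree := Polynomial.natDegree_pos_iff_degree_pos.mpr hf
  have hfne : f ≠ 0 := fun h => by simp [h] at hf
  set S := ∑ i ∈ Finset.range (f.natDegree + 1), Complex.abs (f.coeff i) with hS
  set l := Complex.abs f.leadingCoeff with hl
  have hlpos : 0 < l := by
    simp only [hl, AbsoluteValue.pos_iff]
    exact Polynomial.leadingCoeff_ne_zero.mpr hfne
  obtain ⟨e, he⟩ : ∃ e, f.natDegree = e + 1 := ⟨f.natDegree - 1, by omega⟩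
  refine ⟨max 1 (max (2 * S / l) (2 / l)), le_max_left _ _, fun z hz => ?_⟩
  have hz1 : 1 ≤ Complex.abs z := le_trans (le_max_left _ _) hz
  have hz2 : 2 * S / l ≤ Complex.abs z := le_trans (le_trans (le_max_left _ _) (le_max_right _ _)) hz
  have hz3 : 2 / l ≤ Complex.abs z := le_trans (le_trans (le_max_right _ _) (le_max_right _ _)) hz
  -- tail bound
  have htail : Complex.abs (f.eval z - f.leadingCoeff * z ^ f.natDegree)
      ≤ S * Complex.abs z ^ e := by
    have hev : f.eval z - f.leadingCoeff * z ^ f.natDegree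
        = ∑ i ∈ Finset.range (e + 1), f.coeff i * z ^ i := by
      rw [Polynomial.eval_eq_sum_range, he, Finset.sum_range_succ, ← he,
        Polynomial.coeff_natDegree]
      ring
    rw [hev]
    calc Complex.abs (∑ i ∈ Finset.range (e + 1), f.coeff i * z ^ i)
        ≤ ∑ i ∈ Finset.range (e + 1), Complex.abs (f.coeff i * z ^ i) :=
          Complex.abs.sum_le _ _
      _ ≤ ∑ i ∈ Finset.range (e + 1), Complex.abs (f.coeff i) * Complex.abs z ^ e := by
          apply Finset.sum_le_sum
          intro i hi
          rw [map_mul, map_pow]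
          apply mul_le_mul_of_nonneg_left _ (AbsoluteValue.nonneg _ _)
          exact pow_le_pow_right₀ hz1 (Nat.lt_succ_iff.mp (Finset.mem_range.mp hi))
      _ = (∑ i ∈ Finset.range (e + 1), Complex.abs (f.coeff i)) * Complex.abs z ^ e := by
          rw [Finset.sum_mul]
      _ ≤ S * Complex.abs z ^ e := by
          apply mul_le_mul_of_nonneg_right _ (by positivity)
          rw [hS, he]
          exact Finset.sum_le_sum_of_subset_of_nonneg (Finset.range_subset_range.mpr (by omega))
            (fun i _ _ => AbsoluteValue.nonneg _ _)
  have hmain : l / 2 * Complex.abs z ^ f.natDegree ≤ Complex.abs (f.eval z) := by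
    have h1 : l * Complex.abs z ^ f.natDegree
        ≤ Complex.abs (f.eval z) + S * Complex.abs z ^ e := by
      have : l * Complex.abs z ^ f.natDegree = Complex.abs (f.leadingCoeff * z ^ f.natDegree) := by
        rw [map_mul, map_pow]
      rw [this]
      calc Complex.abs (f.leadingCoeff * z ^ f.natDegree)
          ≤ Complex.abs (f.eval z) +
            Complex.abs (f.leadingCoeff * z ^ f.natDegree - f.eval z) := by
            have := Complex.abs.add_le (f.eval z)
              (f.leadingCoeff * z ^ f.natDegree - f.eval z)
            simpa using this
        _ ≤ Complex.abs (f.eval z) + S * Complex.abs z ^ e := by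
            rw [show f.leadingCoeff * z ^ f.natDegree - f.eval z
              = -(f.eval z - f.leadingCoeff * z ^ f.natDegree) by ring, AbsoluteValue.map_neg]
            linarith [htail]
    have h2 : S * Complex.abs z ^ e ≤ l / 2 * Complex.abs z ^ f.natDegree := by
      rw [he, pow_succ]
      have hS2 : S ≤ l / 2 * Complex.abs z := by
        rw [div_le_iff₀ hlpos] at hz2
        linarith
      calc S * Complex.abs z ^ e ≤ (l / 2 * Complex.abs z) * Complex.abs z ^ e :=
            mul_le_mul_of_nonneg_right hS2 (by positivity)
        _ = l / 2 * (Complex.abs z ^ e * Complex.abs z) := by ring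
    linarith
  refine ⟨?_, hmain⟩
  calc (1:ℝ) = l / 2 * (2 / l) := by field_simp
    _ ≤ l / 2 * Complex.abs z := by
        apply mul_le_mul_of_nonneg_left hz3 (by positivity)
    _ ≤ l / 2 * Complex.abs z ^ f.natDegree := by
        apply mul_le_mul_of_nonneg_left _ (by positivity)
        calc Complex.abs z = Complex.abs z ^ 1 := (pow_one _).symm
          _ ≤ Complex.abs z ^ f.natDegree := pow_le_pow_right₀ hz1 hdpos
    _ ≤ Complex.abs (f.eval z) := hmain
set_option maxHeartbeats 1000000 in
theorem stmt6 (f : Polynomial ℂ) (hf : 0 < f.degree) (c : ℂ)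
    (fs : ℕ → ℂ → ℂ)
    (h0 : ∀ z, fs 0 z = z) (h1 : ∀ z, fs 1 z = f.eval z)
    (hrec : ∀ n z, fs (n + 2) z = fs (n + 1) z * fs n z + c)
    (d : ℕ → ℕ) (hd0 : d 0 = 1) (hd1 : d 1 = f.natDegree)
    (hdrec : ∀ n, d (n + 2) = d (n + 1) + d n) :
    (∃ C : ℝ, C > 0 ∧ ∀ n : ℕ, ∀ z : ℂ,
      |(1 / (d (n + 1) : ℝ)) * max (Real.log (‖fs (n + 1) z‖)) 0 -
        (1 / (d n : ℝ)) * max (Real.log (‖fs n z‖)) 0| ≤ C / (d (n + 1) : ℝ)) ∧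
    ∃ g : ℂ → ℝ, TendstoUniformly
      (fun (n : ℕ) (z : ℂ) => (1 / (d n : ℝ)) * max (Real.log (‖fs n z‖)) 0)
      g Filter.atTop := by
  classical
  have hdeg1 : 0 < f.natDegree := Polynomial.natDegree_pos_iff_degree_pos.mpr hf
  -- facts about d
  have hdd : ∀ n, 0 < d n ∧ d n ≤ d (n + 1) := by
    intro n
    induction n with
    | zero => exact ⟨by omega, by rw [hd0, hd1]; omega⟩
    | succ n ih => exact ⟨lt_of_lt_of_le ih.1 ih.2, by rw [hdrec n]; omega⟩
  have hdpos : ∀ n, 0 < d n := fun n => (hdd n).1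
  have hdmono : ∀ n, d n ≤ d (n + 1) := fun n => (hdd n).2
  have hdR : ∀ n, (0:ℝ) < (d n : ℝ) := fun n => by exact_mod_cast hdpos n
  have hd1le : ∀ n, (1:ℝ) ≤ (d n : ℝ) := fun n => by exact_mod_cast hdpos n
  have hdcast : ∀ n, (d (n+2) : ℝ) = (d (n+1) : ℝ) + (d n : ℝ) := by
    intro n; rw [hdrec]; push_cast; ring
  set u : ℕ → ℂ → ℝ := fun n z => Real.log (max (Complex.abs (fs n z)) 1) with hu
  have hmaxlog : ∀ (n : ℕ) (z : ℂ),
      max (Real.log (‖fs n z‖)) 0 = u n z :=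
    fun n z => myL_max_log _ (norm_nonneg _)
  simp only [hmaxlog]
  -- constants from the polynomial
  set S := ∑ i ∈ Finset.range (f.natDegree + 1), Complex.abs (f.coeff i) with hS
  have hfne : f ≠ 0 := fun h => by simp [h] at hf
  have hlpos : 0 < Complex.abs f.leadingCoeff := by
    simp only [AbsoluteValue.pos_iff]
    exact Polynomial.leadingCoeff_ne_zero.mpr hfne
  have hSl : Complex.abs f.leadingCoeff ≤ S := by
    rw [hS, ← Polynomial.coeff_natDegree]
    exact Finset.single_le_sum (f := fun i => Complex.abs (f.coeff i))
      (fun i _ => AbsoluteValue.nonneg _ _) (Finset.self_mem_range_succ _)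
  have hSpos : 0 < S := lt_of_lt_of_le hlpos hSl
  obtain ⟨R, hR1, hRlow⟩ := poly_lower f hf
  have hcnn : 0 ≤ Complex.abs c := AbsoluteValue.nonneg _ _
  set M : ℝ := R + S + 2 * Complex.abs c + 2 with hM
  have hM2 : 2 ≤ M := by linarith
  have hMR : R ≤ M := by linarith
  have hMS : S < M := by linarith
  have hMc : 1 + 2 * Complex.abs c ≤ M := by linarith
  -- the key claim
  have KC : ∀ n, (∀ z, Complex.abs (fs n z) < 1/2 → Complex.abs (fs (n+1) z) < M) ∧
      (∀ z, Complex.abs (fs (n+1) z) < 1/2 → Complex.abs (fs n z) < M) := by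
    intro n
    induction n with
    | zero =>
      constructor
      · intro z hz
        rw [h0] at hz
        rw [h1]
        calc Complex.abs (f.eval z) ≤ S * (max (Complex.abs z) 1) ^ f.natDegree :=
              poly_eval_le f z
          _ = S := by rw [max_eq_right (by linarith : Complex.abs z ≤ 1), one_pow, mul_one]
          _ < M := hMS
      · intro z hz
        rw [h1] at hz
        rw [h0]
        by_contra hcon
        push_neg at hcon
        have := (hRlow z (le_trans hMR hcon)).1
        linarith
    | succ n ih =>
      constructor
      · intro z hz
        have hn : Complex.abs (fs n z) < M := ih.2 z hz
        rw [hrec]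
        calc Complex.abs (fs (n+1) z * fs n z + c)
            ≤ Complex.abs (fs (n+1) z) * Complex.abs (fs n z) + Complex.abs c := by
              calc Complex.abs (fs (n+1) z * fs n z + c)
                  ≤ Complex.abs (fs (n+1) z * fs n z) + Complex.abs c :=
                    Complex.abs.add_le _ _
                _ = _ := by rw [map_mul]
          _ < (1/2) * M + Complex.abs c := by
              have := mul_lt_mul'' hz hn (AbsoluteValue.nonneg _ _) (AbsoluteValue.nonneg _ _)
              linarith
          _ ≤ M := by linarith
      · intro z hz
        by_contra hcon
        push_neg at hcon
        have hpos : (0:ℝ) < Complex.abs (fs (n+1) z) := lt_of_lt_of_le (by linarith) hcon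
        have hprod : Complex.abs (fs (n+1) z) * Complex.abs (fs n z)
            < 1/2 + Complex.abs c := by
          have he : fs (n+1) z * fs n z = fs (n+2) z - c := by rw [hrec]; ring
          rw [← map_mul, he]
          calc Complex.abs (fs (n+2) z - c)
              ≤ Complex.abs (fs (n+2) z) + Complex.abs c := by
                rw [sub_eq_add_neg]
                calc Complex.abs (fs (n+2) z + -c)
                    ≤ Complex.abs (fs (n+2) z) + Complex.abs (-c) := Complex.abs.add_le _ _
                  _ = _ := by rw [AbsoluteValue.map_neg]
            _ < 1/2 + Complex.abs c := by linarith
        have hsmall : Complex.abs (fs n z) < 1/2 := by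
          have h1' : Complex.abs (fs n z)
              < (1/2 + Complex.abs c) / Complex.abs (fs (n+1) z) := by
            rw [lt_div_iff₀ hpos, mul_comm]
            exact hprod
          have h2' : (1/2 + Complex.abs c) / Complex.abs (fs (n+1) z)
              ≤ (1/2 + Complex.abs c) / M :=
            div_le_div_of_nonneg_left (by linarith) (by linarith) hcon
          have h3' : (1/2 + Complex.abs c) / M ≤ 1/2 := by
            rw [div_le_iff₀ (by linarith : (0:ℝ) < M)]
            linarith
          linarith
        exact absurd (ih.1 z hsmall) (not_lt.mpr hcon)
  have hlogM : 0 ≤ Real.log M := Real.log_nonneg (by linarith)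
  have hlog2 : 0 ≤ Real.log 2 := Real.log_nonneg one_le_two
  -- product lower bound
  have PL : ∀ n z, u (n+1) z + u n z - (2 * Real.log M + Real.log 2)
      ≤ Real.log (max (Complex.abs (fs (n+1) z) * Complex.abs (fs n z)) 1) := by
    intro n z
    have hKa : M ≤ Complex.abs (fs (n+1) z) → 1/2 ≤ Complex.abs (fs n z) := by
      intro h; by_contra h'; push_neg at h'
      exact absurd ((KC n).1 z h') (not_lt.mpr h)
    have hKb : M ≤ Complex.abs (fs n z) → 1/2 ≤ Complex.abs (fs (n+1) z) := by
      intro h; by_contra h'; push_neg at h'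
      exact absurd ((KC n).2 z h') (not_lt.mpr h)
    simp only [hu]
    rcases le_or_gt M (Complex.abs (fs (n+1) z)) with h | h
    · exact myL_prod_lower hM2 (AbsoluteValue.nonneg _ _) (AbsoluteValue.nonneg _ _) h (hKa h)
    · rcases le_or_gt M (Complex.abs (fs n z)) with h' | h'
      · have := myL_prod_lower hM2 (AbsoluteValue.nonneg _ _) (AbsoluteValue.nonneg _ _)
          h' (hKb h')
        rw [mul_comm (Complex.abs (fs (n+1) z)) (Complex.abs (fs n z))]
        linarith
      · have h1' := myL_le_log (by linarith : (1:ℝ) ≤ M) h.le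
        have h2' := myL_le_log (by linarith : (1:ℝ) ≤ M) h'.le
        have h3' := myL_nonneg (Complex.abs (fs (n+1) z) * Complex.abs (fs n z))
        linarith
  set C1 : ℝ := Real.log (1 + Complex.abs c) + (2 * Real.log M + Real.log 2) with hC1
  have hC1nn : 0 ≤ C1 := by
    have : 0 ≤ Real.log (1 + Complex.abs c) := Real.log_nonneg (by linarith)
    rw [hC1]; linarith
  -- the additive recursion estimate
  have hdelta : ∀ n z, |u (n+2) z - u (n+1) z - u n z| ≤ C1 := by
    intro n z
    have ha : 0 ≤ Complex.abs (fs (n+1) z) := AbsoluteValue.nonneg _ _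
    have hb : 0 ≤ Complex.abs (fs n z) := AbsoluteValue.nonneg _ _
    have habs1 : Complex.abs (fs (n+2) z)
        ≤ Complex.abs (fs (n+1) z) * Complex.abs (fs n z) + Complex.abs c := by
      rw [hrec]
      calc Complex.abs (fs (n+1) z * fs n z + c)
          ≤ Complex.abs (fs (n+1) z * fs n z) + Complex.abs c := Complex.abs.add_le _ _
        _ = _ := by rw [map_mul]
    have habs2 : Complex.abs (fs (n+1) z) * Complex.abs (fs n z)
        ≤ Complex.abs (fs (n+2) z) + Complex.abs c := by
      have he : fs (n+1) z * fs n z = fs (n+2) z - c := by rw [hrec]; ring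
      rw [← map_mul, he, sub_eq_add_neg]
      calc Complex.abs (fs (n+2) z + -c)
          ≤ Complex.abs (fs (n+2) z) + Complex.abs (-c) := Complex.abs.add_le _ _
        _ = _ := by rw [AbsoluteValue.map_neg]
    have hup : u (n+2) z ≤ u (n+1) z + u n z + Real.log (1 + Complex.abs c) := by
      have hmul := myL_mul_le ha hb
      have hstep1 : Real.log (max (Complex.abs (fs (n+2) z)) 1)
          ≤ Real.log (max (Complex.abs (fs (n+1) z) * Complex.abs (fs n z) + Complex.abs c) 1) :=
        myL_mono habs1
      have hstep2 := myL_add_le (Complex.abs c) (mul_nonneg ha hb) hcnn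
      simp only [hu]
      linarith
    have hlow : u (n+1) z + u n z - (2 * Real.log M + Real.log 2)
        ≤ u (n+2) z + Real.log (1 + Complex.abs c) := by
      have hPL := PL n z
      have hstep1 : Real.log (max (Complex.abs (fs (n+1) z) * Complex.abs (fs n z)) 1)
          ≤ Real.log (max (Complex.abs (fs (n+2) z) + Complex.abs c) 1) := myL_mono habs2
      have hstep2 := myL_add_le (Complex.abs c) (AbsoluteValue.nonneg Complex.abs (fs (n+2) z)) hcnn
      simp only [hu] at *
      linarith
    rw [abs_le, hC1]
    constructor
    · linarith
    · linarith
  set C2 : ℝ := Real.log (max S 1) + (f.natDegree : ℝ) * Real.log R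
      + |Real.log (Complex.abs f.leadingCoeff / 2)| with hC2
  have hlogR : 0 ≤ Real.log R := Real.log_nonneg hR1
  have hC2nn : 0 ≤ C2 := by
    rw [hC2]
    have h1' := myL_nonneg S
    have h2' : 0 ≤ (f.natDegree : ℝ) * Real.log R := by positivity
    have h3' : 0 ≤ |Real.log (Complex.abs f.leadingCoeff / 2)| := abs_nonneg _
    linarith
  -- base estimate
  have he0 : ∀ z, |u 1 z - (d 1 : ℝ) * u 0 z| ≤ C2 := by
    intro z
    have hu0 : u 0 z = Real.log (max (Complex.abs z) 1) := by simp only [hu, h0]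
    have hu1 : u 1 z = Real.log (max (Complex.abs (f.eval z)) 1) := by simp only [hu, h1]
    have hd1R : (d 1 : ℝ) = (f.natDegree : ℝ) := by rw [hd1]
    have hm1 : (1:ℝ) ≤ max (Complex.abs z) 1 := le_max_right _ _
    have habs3 : |Real.log (Complex.abs f.leadingCoeff / 2)| ≥ 0 := abs_nonneg _
    have hLS : 0 ≤ Real.log (max S 1) := myL_nonneg S
    have hupper : u 1 z - (d 1 : ℝ) * u 0 z ≤ C2 := by
      have h1' : u 1 z ≤ Real.log (max S 1)
          + (f.natDegree : ℝ) * Real.log (max (Complex.abs z) 1) := by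
        rw [hu1]
        calc Real.log (max (Complex.abs (f.eval z)) 1)
            ≤ Real.log (max (S * (max (Complex.abs z) 1) ^ f.natDegree) 1) :=
              myL_mono (poly_eval_le f z)
          _ ≤ Real.log (max S 1) + Real.log (max ((max (Complex.abs z) 1) ^ f.natDegree) 1) :=
              myL_mul_le hSpos.le (by positivity)
          _ = Real.log (max S 1) + (f.natDegree : ℝ) * Real.log (max (Complex.abs z) 1) := by
              rw [max_eq_left (one_le_pow₀ hm1), Real.log_pow]
      rw [hC2, hd1R, hu0]
      have : 0 ≤ (f.natDegree : ℝ) * Real.log R := by positivity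
      linarith
    have hlower : (d 1 : ℝ) * u 0 z - u 1 z ≤ C2 := by
      rcases le_or_gt (Complex.abs z) R with hzR | hzR
      · have hlm : Real.log (max (Complex.abs z) 1) ≤ Real.log R := myL_le_log hR1 hzR
        have hu1nn : 0 ≤ u 1 z := by rw [hu1]; exact myL_nonneg _
        rw [hC2, hd1R, hu0]
        have := mul_le_mul_of_nonneg_left hlm (by positivity : (0:ℝ) ≤ (f.natDegree : ℝ))
        linarith
      · obtain ⟨hge1, hgel⟩ := hRlow z hzR.le
        have hz1 : (1:ℝ) ≤ Complex.abs z := le_trans hR1 hzR.le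
        have hmz : max (Complex.abs z) 1 = Complex.abs z := max_eq_left hz1
        have hu1eq : u 1 z = Real.log (Complex.abs (f.eval z)) := by
          rw [hu1, max_eq_left hge1]
        have hkey : Real.log (Complex.abs f.leadingCoeff / 2)
            + (f.natDegree : ℝ) * Real.log (Complex.abs z)
            ≤ Real.log (Complex.abs (f.eval z)) := by
          rw [← Real.log_pow, ← Real.log_mul (by positivity) (by positivity)]
          exact Real.log_le_log (by positivity) hgel
        have habs4 : -|Real.log (Complex.abs f.leadingCoeff / 2)|
            ≤ Real.log (Complex.abs f.leadingCoeff / 2) := neg_abs_le _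
        rw [hC2, hd1R, hu0, hmz, hu1eq]
        have : 0 ≤ (f.natDegree : ℝ) * Real.log R := by positivity
        linarith
    rw [abs_le]
    exact ⟨by linarith, hupper⟩
  -- inductive telescoping estimate
  have hE : ∀ n, ∀ z, |(d n : ℝ) * u (n+1) z - (d (n+1) : ℝ) * u n z|
      ≤ C2 + C1 * (d (n+2) : ℝ) := by
    intro n
    induction n with
    | zero =>
      intro z
      have hd0R : (d 0 : ℝ) = 1 := by rw [hd0]; norm_num
      rw [hd0R, one_mul]
      have h1' := he0 z
      have h2' : 0 ≤ C1 * (d 2 : ℝ) := mul_nonneg hC1nn (hdR 2).le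
      calc |u 1 z - (d 1 : ℝ) * u 0 z| ≤ C2 := h1'
        _ ≤ C2 + C1 * (d 2 : ℝ) := by linarith
    | succ n ih =>
      intro z
      have key : (d (n+1) : ℝ) * u (n+2) z - (d (n+2) : ℝ) * u (n+1) z
          = -((d n : ℝ) * u (n+1) z - (d (n+1) : ℝ) * u n z)
            + (d (n+1) : ℝ) * (u (n+2) z - u (n+1) z - u n z) := by
        rw [hdcast n]; ring
      rw [key]
      calc |-((d n : ℝ) * u (n+1) z - (d (n+1) : ℝ) * u n z)
            + (d (n+1) : ℝ) * (u (n+2) z - u (n+1) z - u n z)|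
          ≤ |-((d n : ℝ) * u (n+1) z - (d (n+1) : ℝ) * u n z)|
            + |(d (n+1) : ℝ) * (u (n+2) z - u (n+1) z - u n z)| := abs_add_le _ _
        _ = |(d n : ℝ) * u (n+1) z - (d (n+1) : ℝ) * u n z|
            + (d (n+1) : ℝ) * |u (n+2) z - u (n+1) z - u n z| := by
            rw [abs_neg, abs_mul, abs_of_pos (hdR (n+1))]
        _ ≤ (C2 + C1 * (d (n+2) : ℝ)) + (d (n+1) : ℝ) * C1 :=
            add_le_add (ih z) (mul_le_mul_of_nonneg_left (hdelta n z) (hdR (n+1)).le)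
        _ = C2 + C1 * ((d (n+2) : ℝ) + (d (n+1) : ℝ)) := by ring
        _ = C2 + C1 * (d (n+3) : ℝ) := by rw [hdcast (n+1)]
  have hd3 : ∀ n, (d (n+3) : ℝ) ≤ 3 * (d (n+1) : ℝ) := by
    intro n
    have h1' : d n ≤ d (n+1) := hdmono n
    have h2' : d (n+3) = d (n+1) + d n + d (n+1) := by rw [hdrec (n+1), hdrec n]
    have h3' : d (n+3) ≤ 3 * d (n+1) := by omega
    exact_mod_cast h3'
  have hEfin : ∀ n z, |(d n : ℝ) * u (n+1) z - (d (n+1) : ℝ) * u n z|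
      ≤ (C2 + 3 * C1) * (d n : ℝ) := by
    intro n z
    cases n with
    | zero =>
      have hd0R : (d 0 : ℝ) = 1 := by rw [hd0]; norm_num
      rw [hd0R, mul_one, one_mul]
      have := he0 z
      linarith
    | succ n =>
      have h1' := hE (n+1) z
      have h2' := hd3 n
      have h3' := hd1le (n+1)
      nlinarith [mul_le_mul_of_nonneg_left h2' hC1nn, mul_le_mul_of_nonneg_left h3' hC2nn]
  set C : ℝ := C2 + 3 * C1 + 1 with hC
  have hCpos : 0 < C := by rw [hC]; linarith
  have main1 : ∀ (n : ℕ) (z : ℂ),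
      |(1 / (d (n+1) : ℝ)) * u (n+1) z - (1 / (d n : ℝ)) * u n z| ≤ C / (d (n+1) : ℝ) := by
    intro n z
    have hp := hdR n
    have hq := hdR (n+1)
    have heq : (1 / (d (n+1) : ℝ)) * u (n+1) z - (1 / (d n : ℝ)) * u n z
        = ((d n : ℝ) * u (n+1) z - (d (n+1) : ℝ) * u n z) / ((d n : ℝ) * (d (n+1) : ℝ)) := by
      field_simp
    rw [heq, abs_div, abs_of_pos (mul_pos hp hq)]
    rw [div_le_div_iff₀ (mul_pos hp hq) hq]
    have h1' := hEfin n z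
    nlinarith [mul_le_mul_of_nonneg_right h1' hq.le, mul_pos hp hq, hCpos.le]
  -- summability of the bounds
  have hsqrt2 : (1:ℝ) < Real.sqrt 2 := by
    rw [show (1:ℝ) = Real.sqrt 1 from (Real.sqrt_one).symm]
    exact Real.sqrt_lt_sqrt (by norm_num) (by norm_num)
  have hgrow : ∀ n, Real.sqrt 2 ^ n ≤ 2 * (d n : ℝ) := by
    intro n
    induction n using Nat.twoStepInduction with
    | zero =>
      rw [hd0]
      norm_num
    | one =>
      rw [pow_one]
      have h4 : Real.sqrt 4 = 2 := by
        rw [show (4:ℝ) = 2^2 by norm_num]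
        exact Real.sqrt_sq (by norm_num)
      have hle : Real.sqrt 2 ≤ 2 := by
        calc Real.sqrt 2 ≤ Real.sqrt 4 := Real.sqrt_le_sqrt (by norm_num)
          _ = 2 := h4
      have := hd1le 1
      nlinarith
    | more n ih1 ih2 =>
      have hsq : Real.sqrt 2 * Real.sqrt 2 = 2 := Real.mul_self_sqrt (by norm_num)
      have hmon : (d n : ℝ) ≤ (d (n+1) : ℝ) := by exact_mod_cast hdmono n
      calc Real.sqrt 2 ^ (n+2) = Real.sqrt 2 ^ n * (Real.sqrt 2 * Real.sqrt 2) := by ring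
        _ = 2 * Real.sqrt 2 ^ n := by rw [hsq]; ring
        _ ≤ 2 * (2 * (d n : ℝ)) := by linarith
        _ ≤ 2 * (d (n+2) : ℝ) := by rw [hdcast n]; linarith
  have hsum : Summable (fun n => C / (d (n+1) : ℝ)) := by
    have hrpos : (0:ℝ) ≤ (Real.sqrt 2)⁻¹ := by positivity
    have hrlt : (Real.sqrt 2)⁻¹ < 1 := inv_lt_one_of_one_lt₀ hsqrt2
    have hgeo := (summable_geometric_of_lt_one hrpos hrlt).mul_left
      (2 * C * (Real.sqrt 2)⁻¹)
    apply Summable.of_nonneg_of_le (fun n => by positivity) _ hgeo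
    intro n
    have hpow := hgrow (n+1)
    have hppos : (0:ℝ) < Real.sqrt 2 ^ (n+1) := by positivity
    have hsne : Real.sqrt 2 ≠ 0 := by positivity
    rw [div_le_iff₀ (hdR (n+1))]
    have hineq : 2 * C * (Real.sqrt 2)⁻¹ * ((Real.sqrt 2)⁻¹ ^ n) * (d (n+1) : ℝ)
        = 2 * C * (d (n+1) : ℝ) / (Real.sqrt 2 ^ (n+1)) := by
      rw [div_eq_mul_inv, ← inv_pow, pow_succ']
      ring
    rw [hineq, le_div_iff₀ hppos]
    nlinarith [mul_le_mul_of_nonneg_left hpow hCpos.le]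
  -- pointwise limits
  have hcau : ∀ z : ℂ, ∃ l : ℝ,
      Filter.Tendsto (fun n => (1 / (d n : ℝ)) * u n z) Filter.atTop (nhds l) := by
    intro z
    apply cauchySeq_tendsto_of_complete
    apply cauchySeq_of_dist_le_of_summable _ _ hsum
    intro n
    rw [Real.dist_eq, abs_sub_comm]
    exact main1 n z
  choose g hg using hcau
  refine ⟨⟨C, hCpos, main1⟩, g, ?_⟩
  rw [Metric.tendstoUniformly_iff]
  intro ε hε
  have httail : Filter.Tendsto (fun i => ∑' k, C / (d (k + i + 1) : ℝ))
      Filter.atTop (nhds 0) := tendsto_sum_nat_add (fun k => C / (d (k+1) : ℝ))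
  have hev := httail.eventually (gt_mem_nhds hε)
  filter_upwards [hev] with n hn z
  have hdist := dist_le_tsum_of_dist_le_of_tendsto (fun k => C / (d (k+1) : ℝ))
      (fun m => by rw [Real.dist_eq, abs_sub_comm]; exact main1 m z) hsum (hg z) n
  rw [dist_comm]
  refine lt_of_le_of_lt (le_trans hdist (le_of_eq ?_)) hn
  exact tsum_congr fun m => by rw [Nat.add_comm n m]
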